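/- Let a ∈ ℝ, w ∈ ℂ with w ≠ 0 and |a| < |w|, let τ > 0, k ∈ ℤ, and Ω ∈ ℝ with Ω ≠ 0. Then the following are equivalent: (i) a = |w|·cos(Arg(w) − τ·Ω), Ω = |w|·sin(Arg(w) − τ·Ω), and Arg(w) − τ·Ω ∈ [2kπ, π + 2kπ]; (ii) Ω = √(|w|² − a²) and τ·Ω = Arg(w) − arccos(a/|w|) − 2kπ. -/

import Mathlib

/-- Angular frequency equations with `Arg(w) − τΩ ∈ [2kπ, π + 2kπ]` are equivalent to
`Ω = √(|w|² − a²)` and `τΩ = Arg(w) − arccos(a/|w|) − 2kπ`. -/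
theorem angular_frequency_upper (a : ℝ) (w : ℂ) (hw : w ≠ 0) (hab : |a| < ‖w‖)
    (τ : ℝ) (hτ : 0 < τ) (k : ℤ) (Ω : ℝ) (hΩ : Ω ≠ 0) :
    (a = ‖w‖ * Real.cos (w.arg - τ * Ω) ∧
        Ω = ‖w‖ * Real.sin (w.arg - τ * Ω) ∧
        w.arg - τ * Ω ∈ Set.Icc (2 * (k : ℝ) * Real.pi) (Real.pi + 2 * (k : ℝ) * Real.pi)) ↔
      (Ω = Real.sqrt ((‖w‖) ^ 2 - a ^ 2) ∧
        τ * Ω = w.arg - Real.arccos (a / ‖w‖) - 2 * (k : ℝ) * Real.pi) := by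
  set r := ‖w‖ with hr
  have hr0 : 0 < r := (abs_nonneg a).trans_lt hab
  constructor
  · rintro ⟨ha, hΩs, hm1, hm2⟩
    set θ := w.arg - τ * Ω with hθ
    have hlo : 0 ≤ θ - 2 * (k : ℝ) * Real.pi := by linarith
    have hhi : θ - 2 * (k : ℝ) * Real.pi ≤ Real.pi := by linarith
    have hsin : Real.sin (θ - 2 * (k : ℝ) * Real.pi) = Real.sin θ := by
      have := Real.sin_sub_int_mul_two_pi θ k
      rw [← this]; ring_nf
    have hcos : Real.cos (θ - 2 * (k : ℝ) * Real.pi) = Real.cos θ := by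
      have := Real.cos_sub_int_mul_two_pi θ k
      rw [← this]; ring_nf
    have hsin0 : 0 ≤ Real.sin θ := by
      rw [← hsin]; exact Real.sin_nonneg_of_nonneg_of_le_pi hlo hhi
    have hΩ0 : 0 ≤ Ω := by
      rw [hΩs]; positivity
    have hΩeq : Ω = Real.sqrt (r ^ 2 - a ^ 2) := by
      have hsq : r ^ 2 - a ^ 2 = Ω ^ 2 := by
        have hpyth := Real.sin_sq_add_cos_sq θ
        rw [ha, hΩs]; nlinarith [hpyth]
      rw [hsq, Real.sqrt_sq hΩ0]
    refine ⟨hΩeq, ?_⟩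
    have hcosval : a / r = Real.cos (θ - 2 * (k : ℝ) * Real.pi) := by
      rw [hcos, ha]; field_simp
    have harccos : Real.arccos (a / r) = θ - 2 * (k : ℝ) * Real.pi := by
      rw [hcosval, Real.arccos_cos hlo hhi]
    rw [harccos]; simp only [hθ]; ring
  · rintro ⟨hΩeq, hτΩ⟩
    set x := a / r with hx
    have hx1 : -1 ≤ x := by
      rw [hx, le_div_iff₀ hr0]
      have := abs_le.mp (le_of_lt hab)
      linarith [this.1]
    have hx2 : x ≤ 1 := by
      rw [hx, div_le_one hr0]
      have := abs_le.mp (le_of_lt hab)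
      linarith [this.2]
    have hθ : w.arg - τ * Ω = Real.arccos x + 2 * (k : ℝ) * Real.pi := by
      linarith [hτΩ]
    have hcos : Real.cos (w.arg - τ * Ω) = x := by
      rw [hθ]
      have : Real.arccos x + 2 * (k : ℝ) * Real.pi
          = Real.arccos x + (k : ℝ) * (2 * Real.pi) := by ring
      rw [this, Real.cos_add_int_mul_two_pi, Real.cos_arccos hx1 hx2]
    have hsin : Real.sin (w.arg - τ * Ω) = Real.sqrt (1 - x ^ 2) := by
      rw [hθ]
      have : Real.arccos x + 2 * (k : ℝ) * Real.pi
          = Real.arccos x + (k : ℝ) * (2 * Real.pi) := by ring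
      rw [this, Real.sin_add_int_mul_two_pi, Real.sin_arccos]
    refine ⟨?_, ?_, ?_, ?_⟩
    · rw [hcos, hx]; field_simp
    · rw [hsin, hΩeq]
      rw [show r ^ 2 - a ^ 2 = r ^ 2 * (1 - x ^ 2) by rw [hx]; field_simp]
      rw [Real.sqrt_mul (by positivity), Real.sqrt_sq hr0.le]
    · rw [hθ]; linarith [Real.arccos_nonneg x]
    · rw [hθ]; linarith [Real.arccos_le_pi x]
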